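/- (Per-block covariance bound for randomized indicators) Assume (A1), (B1) and (B2) with constant r, let α ∈ (0,1), and let G and G′ be two independent random permutations, each uniformly distributed on 𝒢 and independent of W. For b = 1, …, B define R_b(g, w) = 1{ p^(b)(gw) > c(α) }. Then for every block b, 0 ≤ E[ R_b(G, W) R_b(G′, W) ] − ( E[ R_b(G, W) ] )² ≤ ( log(1/(1−α)) · r² · m_B / B )². -/

import Mathlib

open scoped ENNReal

noncomputable section

/-- A multiple-testing framework with `m` hypotheses: data space `Ω` with distribution `Q`,
`p`-values `p j` taking values in the finite set `S ⊆ [0,1]`, set of true nulls `I`,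
a finite group `G` of measurable bijections of the data space, and a partition
`A 1, …, A B` of the hypotheses into blocks, each containing a true null. -/
structure Framework (m : ℕ) where
  Ω : Type
  [meas : MeasurableSpace Ω]
  Q : MeasureTheory.Measure Ω
  Qprob : MeasureTheory.IsProbabilityMeasure Q
  S : Finset ℝ
  hS : ∀ s ∈ S, 0 ≤ s ∧ s ≤ 1
  p : Fin m → Ω → ℝ
  p_meas : ∀ j, Measurable (p j)
  p_mem : ∀ j w, p j w ∈ S
  I : Finset (Fin m)
  G : Finset (Ω ≃ᵐ Ω)
  G_one : MeasurableEquiv.refl Ω ∈ G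
  G_mul : ∀ g ∈ G, ∀ g' ∈ G, g.trans g' ∈ G
  G_inv : ∀ g ∈ G, g.symm ∈ G
  B : ℕ
  B_pos : 0 < B
  A : Fin B → Finset (Fin m)
  A_disj : ∀ b b', b ≠ b' → Disjoint (A b) (A b')
  A_cover : ∀ j, ∃ b, j ∈ A b
  A_I : ∀ b, (A b ∩ I).Nonempty

attribute [instance] Framework.meas Framework.Qprob

open MeasureTheory ProbabilityTheory Filter

namespace Framework

variable {m : ℕ} (F : Framework m)

/-- Minimum of the `p`-values over the index set `J` (`1` by convention if `J = ∅`). -/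
def fmin (J : Finset (Fin m)) (w : F.Ω) : ℝ :=
  if h : J.Nonempty then J.inf' h (fun j => F.p j w) else 1

/-- `min_{j ∈ I} p_j(w)`, the minimal `p`-value over the true null hypotheses. -/
def nullMin : F.Ω → ℝ := F.fmin F.I

/-- `min_{1 ≤ j ≤ m} p_j(w)`, the minimal `p`-value over all hypotheses. -/
def fullMin : F.Ω → ℝ := F.fmin Finset.univ

/-- `p^(b)(w) = min_{j ∈ A_b ∩ I} p_j(w)`, the minimal null `p`-value in block `b`. -/
def blockMin (b : Fin F.B) : F.Ω → ℝ := F.fmin (F.A b ∩ F.I)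

/-- The permutation probability `P*(E)(w) = |G|⁻¹ ∑_{g ∈ G} 1{g w ∈ E}`. -/
def Pstar (E : Set F.Ω) (w : F.Ω) : ℝ :=
  (F.G.card : ℝ)⁻¹ * ∑ g ∈ F.G, E.indicator (fun _ => (1 : ℝ)) (g w)

/-- The oracle threshold `c(α) = max {s ∈ S : Q(min_{j ∈ I} p_j(W) ≤ s) ≤ α}`,
with `max ∅ := 0`. -/
def oracle (α : ℝ) : ℝ :=
  ((F.S.filter (fun s => (F.Q {w | F.nullMin w ≤ s}).toReal ≤ α)).max).unbotD 0

/-- The single-step Westfall--Young threshold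
`ĉ(α)(w) = max {s ∈ S : P*(min_{1≤j≤m} p_j(W) ≤ s)(w) ≤ α}`, with `max ∅ := 0`. -/
def wy (α : ℝ) (w : F.Ω) : ℝ :=
  ((F.S.filter (fun s => F.Pstar {w' | F.fullMin w' ≤ s} w ≤ α)).max).unbotD 0

/-- The maximal block size `m_B = max_b |A_b|`. -/
def mB : ℕ := Finset.univ.sup (fun b : Fin F.B => (F.A b).card)

/-- `π_b(c) = Q(p^(b)(W) ≤ c)`. -/
def piB (b : Fin F.B) (c : ℝ) : ℝ := (F.Q {w | F.blockMin b w ≤ c}).toReal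

/-- Assumption (A1): for every pair `g, g' ∈ G`, the random variables
`min (p^(b)(gW)) (p^(b)(g'W))`, `b = 1, …, B`, are mutually independent under `Q`. -/
def A1 : Prop :=
  ∀ g ∈ F.G, ∀ g' ∈ F.G,
    iIndepFun
      (fun b : Fin F.B => fun w => min (F.blockMin b (g w)) (F.blockMin b (g' w))) F.Q

/-- Assumption (B1): for `G` uniformly distributed on the permutation group and independent
of `W`, the joint distribution of `(p_j(GW))_{j ∈ I}` equals that of `(p_j(W))_{j ∈ I}`;
expressed as an equality between the uniform mixture of the pushforwards and the
pushforward of `Q` itself. -/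
def B1 : Prop :=
  (F.G.card : ℝ≥0∞)⁻¹ •
      (∑ g ∈ F.G, Measure.map (fun w => fun j : F.I => F.p j (g w)) F.Q)
    = Measure.map (fun w => fun j : F.I => F.p j w) F.Q

/-- Assumption (B2) with constant `r`:
`r⁻¹ s ≤ P*(p_j(W) ≤ s)(w) ≤ r s` for all `j`, all `s ∈ S` and all `w`. -/
def B2 (r : ℝ) : Prop :=
  ∀ j : Fin m, ∀ s ∈ F.S, ∀ w : F.Ω,
    r⁻¹ * s ≤ F.Pstar {w' | F.p j w' ≤ s} w ∧ F.Pstar {w' | F.p j w' ≤ s} w ≤ r * s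

/-- Assumption (B3): null `p`-values are uniformly distributed on `S`:
`Q(p_j(W) ≤ s) = s` for all `j ∈ I`, `s ∈ S`. -/
def B3 : Prop :=
  ∀ j ∈ F.I, ∀ s ∈ F.S, (F.Q {w | F.p j w ≤ s}).toReal = s

end Framework


section PBAux

open MeasureTheory ProbabilityTheory


lemma PB_meas_inf' {α ι : Type*} [MeasurableSpace α] {s : Finset ι} (hs : s.Nonempty)
    (f : ι → α → ℝ) (hf : ∀ i, Measurable (f i)) :
    Measurable (fun w => s.inf' hs (fun i => f i w)) := by
  induction hs using Finset.Nonempty.cons_induction with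
  | singleton i => simpa using hf i
  | cons i s hi hne ih =>
      have : (fun w => (Finset.cons i s hi).inf' (Finset.cons_nonempty hi) (fun j => f j w))
          = fun w => min (f i w) (s.inf' hne (fun j => f j w)) := by
        funext w; rw [Finset.inf'_cons]
      rw [this]; exact (hf i).min ih

lemma PB_integrable_of_bdd {α : Type*} [MeasurableSpace α] {μ : Measure α}
    [IsProbabilityMeasure μ] {f : α → ℝ} (hf : Measurable f) {C : ℝ}
    (hC : ∀ w, |f w| ≤ C) : Integrable f μ :=
  (integrable_const C).mono' hf.aestronglyMeasurable (Filter.Eventually.of_forall hC)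

/-- Abstract covariance bound for `[0,1]`-valued kernels indexed by a finite set. -/
lemma PB_abstract_cov_bound {Ω : Type} [MeasurableSpace Ω] (Q : Measure Ω)
    [IsProbabilityMeasure Q] {ι : Type*} (G : Finset ι) (hG : G.Nonempty)
    (X : ι → Ω → ℝ) (hmeas : ∀ g, Measurable (X g))
    (h0 : ∀ g w, 0 ≤ X g w) (h1 : ∀ g w, X g w ≤ 1)
    (K : ℝ)
    (hψ : ∀ w, (∑ g ∈ G, (1 - X g w)) ≤ G.card * K) :
    0 ≤ (((G.card : ℝ) ^ 2)⁻¹ * ∑ g ∈ G, ∑ g' ∈ G, ∫ w, X g w * X g' w ∂Q) -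
        ((G.card : ℝ)⁻¹ * ∑ g ∈ G, ∫ w, X g w ∂Q) ^ 2 ∧
      (((G.card : ℝ) ^ 2)⁻¹ * ∑ g ∈ G, ∑ g' ∈ G, ∫ w, X g w * X g' w ∂Q) -
        ((G.card : ℝ)⁻¹ * ∑ g ∈ G, ∫ w, X g w ∂Q) ^ 2 ≤ K ^ 2 := by
  have hNnat : 0 < G.card := Finset.card_pos.mpr hG
  set N : ℝ := (G.card : ℝ) with hNdef
  have hN : 0 < N := by rw [hNdef]; exact_mod_cast hNnat
  set χ : Ω → ℝ := fun w => ∑ g ∈ G, X g w with hχdef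
  have hχm : Measurable χ := Finset.measurable_sum _ (fun g _ => hmeas g)
  have hχ0 : ∀ w, 0 ≤ χ w := fun w => Finset.sum_nonneg (fun g _ => h0 g w)
  have hχN : ∀ w, χ w ≤ N := by
    intro w
    calc χ w ≤ ∑ _g ∈ G, (1:ℝ) := Finset.sum_le_sum (fun g _ => h1 g w)
    _ = N := by simp [hNdef]
  have hχint : Integrable χ Q :=
    PB_integrable_of_bdd hχm (C := N) (fun w => abs_le.mpr ⟨by linarith [hχ0 w], hχN w⟩)
  have hχ2int : Integrable (fun w => χ w * χ w) Q := by
    refine PB_integrable_of_bdd (hχm.mul hχm) (C := N * N) (fun w => abs_le.mpr ⟨?_, ?_⟩)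
    · nlinarith [hχ0 w, hN]
    · nlinarith [hχ0 w, hχN w]
  have hXint : ∀ g, Integrable (X g) Q := fun g =>
    PB_integrable_of_bdd (hmeas g) (C := 1) (fun w => abs_le.mpr ⟨by linarith [h0 g w], h1 g w⟩)
  have e1 : (∑ g ∈ G, ∑ g' ∈ G, ∫ w, X g w * X g' w ∂Q) = ∫ w, χ w * χ w ∂Q := by
    have hrow : ∀ g ∈ G, (∑ g' ∈ G, ∫ w, X g w * X g' w ∂Q) = ∫ w, X g w * χ w ∂Q := by
      intro g _
      rw [← integral_finset_sum _ (fun g' _ => PB_integrable_of_bdd (f := fun w => X g w * X g' w) ((hmeas g).mul (hmeas g'))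
        (C := 1) (fun w => abs_le.mpr ⟨by nlinarith [h0 g w, h0 g' w], by
          nlinarith [h0 g w, h0 g' w, h1 g w, h1 g' w]⟩))]
      congr 1; funext w; rw [← Finset.mul_sum]
    rw [Finset.sum_congr rfl hrow,
      ← integral_finset_sum _ (fun g _ => PB_integrable_of_bdd (f := fun w => X g w * χ w) ((hmeas g).mul hχm)
        (C := N) (fun w => abs_le.mpr ⟨by nlinarith [h0 g w, hχ0 w, hN], by
          nlinarith [h0 g w, h1 g w, hχ0 w, hχN w]⟩))]
    congr 1; funext w; rw [← Finset.sum_mul]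
  have e2 : (∑ g ∈ G, ∫ w, X g w ∂Q) = ∫ w, χ w ∂Q :=
    (integral_finset_sum _ (fun g _ => hXint g)).symm
  set Iχ : ℝ := ∫ w, χ w ∂Q with hIχdef
  have hIχ0 : 0 ≤ Iχ := integral_nonneg hχ0
  have hIχN : Iχ ≤ N := by
    calc Iχ ≤ ∫ _w, N ∂Q := integral_mono hχint (integrable_const N) hχN
    _ = N := by simp
  have i2 : Integrable (fun w => (2*Iχ)*χ w) Q := hχint.const_mul _
  have i1 : Integrable (fun w => χ w * χ w - (2*Iχ)*χ w) Q := hχ2int.sub i2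
  have hsubint : Integrable (fun w => (χ w - Iχ)^2) Q := by
    have hrw : (fun w => (χ w - Iχ)^2) = fun w => χ w * χ w - (2*Iχ)*χ w + Iχ^2 :=
      funext (fun w => by ring)
    rw [hrw]; exact i1.add (integrable_const _)
  have hvar : ∫ w, (χ w - Iχ)^2 ∂Q = (∫ w, χ w * χ w ∂Q) - Iχ^2 := by
    have hrw : (fun w => (χ w - Iχ)^2) = fun w => χ w * χ w - (2*Iχ)*χ w + Iχ^2 :=
      funext (fun w => by ring)
    rw [hrw, integral_add i1 (integrable_const _),
      integral_sub hχ2int i2, integral_const_mul, integral_const]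
    simp only [measure_univ, probReal_univ, ENNReal.toReal_one, one_smul]
    ring
  have h0var : 0 ≤ (∫ w, χ w * χ w ∂Q) - Iχ^2 := hvar ▸ integral_nonneg (fun w => sq_nonneg _)
  have hχlb : ∀ w, N - N*K ≤ χ w := by
    intro w
    have h := hψ w
    have hsum : (∑ g ∈ G, (1 - X g w)) = N - χ w := by
      rw [Finset.sum_sub_distrib]; simp [hNdef, hχdef]
    rw [hsum] at h
    have : (G.card : ℝ) * K = N * K := by rw [hNdef]
    linarith [this ▸ h]
  have hIχlb : N - N*K ≤ Iχ := by
    calc N - N*K = ∫ _w, (N - N*K) ∂Q := by simp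
    _ ≤ Iχ := integral_mono (integrable_const _) hχint hχlb
  have hptw : ∀ w, (χ w - Iχ)^2 ≤ (N*K)^2 := by
    intro w
    exact sq_le_sq' (by linarith [hχlb w, hIχN]) (by linarith [hχN w, hIχlb])
  have hup : (∫ w, χ w * χ w ∂Q) - Iχ^2 ≤ (N*K)^2 := by
    rw [← hvar]
    calc ∫ w, (χ w - Iχ)^2 ∂Q ≤ ∫ _w, (N*K)^2 ∂Q :=
      integral_mono hsubint (integrable_const _) hptw
    _ = (N*K)^2 := by simp
  have hID : ((N : ℝ)^2)⁻¹ * (∫ w, χ w * χ w ∂Q) - (N⁻¹ * Iχ)^2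
      = (N^2)⁻¹ * ((∫ w, χ w * χ w ∂Q) - Iχ^2) := by ring
  rw [e1, e2]
  constructor
  · rw [hID]; positivity
  · rw [hID]
    have hKK : ((N:ℝ)^2)⁻¹ * (N*K)^2 = K^2 := by field_simp
    rw [← hKK]
    exact mul_le_mul_of_nonneg_left hup (by positivity)


section AuxFramework

variable {m : ℕ} (F : Framework m)

lemma PB_fmin_meas (J : Finset (Fin m)) : Measurable (F.fmin J) := by
  unfold Framework.fmin
  by_cases h : J.Nonempty
  · simp only [dif_pos h]; exact PB_meas_inf' h _ (fun j => F.p_meas j)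
  · simp only [dif_neg h]; exact measurable_const

lemma PB_fmin_le_of_mem {J : Finset (Fin m)} {j : Fin m} (hj : j ∈ J) (w : F.Ω) :
    F.fmin J w ≤ F.p j w := by
  unfold Framework.fmin; rw [dif_pos ⟨j, hj⟩]; exact Finset.inf'_le _ hj

lemma PB_fmin_le_iff {J : Finset (Fin m)} (hJ : J.Nonempty) (w : F.Ω) (c : ℝ) :
    F.fmin J w ≤ c ↔ ∃ j ∈ J, F.p j w ≤ c := by
  unfold Framework.fmin; rw [dif_pos hJ]; exact Finset.inf'_le_iff hJ

lemma PB_lt_fmin_iff {J : Finset (Fin m)} (hJ : J.Nonempty) (w : F.Ω) (c : ℝ) :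
    c < F.fmin J w ↔ ∀ j ∈ J, c < F.p j w := by
  unfold Framework.fmin; rw [dif_pos hJ]; exact Finset.lt_inf'_iff hJ

lemma PB_G_card_pos : 0 < F.G.card := Finset.card_pos.mpr ⟨_, F.G_one⟩

lemma PB_ind_nonneg (E : Set F.Ω) (v : F.Ω) :
    0 ≤ E.indicator (fun _ => (1:ℝ)) v :=
  Set.indicator_nonneg (fun _ _ => zero_le_one) v

lemma PB_ind_le_one (E : Set F.Ω) (v : F.Ω) :
    E.indicator (fun _ => (1:ℝ)) v ≤ 1 := by
  classical
  by_cases h : v ∈ E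
  · rw [Set.indicator_of_mem h]
  · rw [Set.indicator_of_notMem h]; norm_num

lemma PB_Pstar_nonneg (E : Set F.Ω) (w : F.Ω) : 0 ≤ F.Pstar E w := by
  unfold Framework.Pstar
  exact mul_nonneg (by positivity)
    (Finset.sum_nonneg (fun g _ => PB_ind_nonneg F E (g w)))

lemma PB_Pstar_abs_le (E : Set F.Ω) (w : F.Ω) : |F.Pstar E w| ≤ 1 := by
  have hN : (0:ℝ) < F.G.card := by exact_mod_cast PB_G_card_pos F
  rw [abs_of_nonneg (PB_Pstar_nonneg F E w)]
  unfold Framework.Pstar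
  have hsum : (∑ g ∈ F.G, E.indicator (fun _ => (1:ℝ)) (g w)) ≤ F.G.card := by
    calc (∑ g ∈ F.G, E.indicator (fun _ => (1:ℝ)) (g w)) ≤ ∑ _g ∈ F.G, (1:ℝ) :=
          Finset.sum_le_sum (fun g _ => PB_ind_le_one F E (g w))
    _ = F.G.card := by simp
  calc (F.G.card : ℝ)⁻¹ * ∑ g ∈ F.G, E.indicator (fun _ => (1:ℝ)) (g w)
      ≤ (F.G.card : ℝ)⁻¹ * F.G.card :=
        mul_le_mul_of_nonneg_left hsum (by positivity)
  _ = 1 := by field_simp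

lemma PB_Pstar_meas {E : Set F.Ω} (hE : MeasurableSet E) : Measurable (F.Pstar E) := by
  unfold Framework.Pstar
  exact (Finset.measurable_sum _
    (fun g _ => (measurable_const.indicator hE).comp g.measurable)).const_mul _

lemma PB_Pstar_int {E : Set F.Ω} (hE : MeasurableSet E) : Integrable (F.Pstar E) F.Q :=
  PB_integrable_of_bdd (PB_Pstar_meas F hE) (fun w => PB_Pstar_abs_le F E w)

lemma PB_integral_Pstar {E : Set F.Ω} (hE : MeasurableSet E) :
    ∫ w, F.Pstar E w ∂F.Q = (F.G.card : ℝ)⁻¹ * ∑ g ∈ F.G, (F.Q ((⇑g) ⁻¹' E)).toReal := by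
  unfold Framework.Pstar
  rw [integral_const_mul]
  congr 1
  have hintg : ∀ g ∈ F.G, Integrable (fun w => E.indicator (fun _ => (1:ℝ)) (g w)) F.Q := by
    intro g _
    refine PB_integrable_of_bdd ((measurable_const.indicator hE).comp g.measurable)
      (C := 1) (fun w => ?_)
    by_cases h : g w ∈ E <;> simp [Set.indicator_apply, h]
  rw [integral_finset_sum _ hintg]
  refine Finset.sum_congr rfl fun g _ => ?_
  have hrw : (fun w => E.indicator (fun _ => (1:ℝ)) (g w))
      = ((⇑g) ⁻¹' E).indicator (fun _ => (1:ℝ)) := by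
    funext w; by_cases h : g w ∈ E <;> simp [Set.indicator_apply, h]
  rw [hrw, integral_indicator_const (1:ℝ) (hE.preimage g.measurable)]
  simp [measureReal_def]

lemma PB_B1_apply (hB1 : F.B1) {j : Fin m} (hj : j ∈ F.I) (c : ℝ) :
    (F.Q {w | F.p j w ≤ c}).toReal
      = (F.G.card : ℝ)⁻¹ * ∑ g ∈ F.G, (F.Q ((⇑g) ⁻¹' {w | F.p j w ≤ c})).toReal := by
  classical
  have hT : MeasurableSet {h : F.I → ℝ | h ⟨j, hj⟩ ≤ c} :=
    measurableSet_le (measurable_pi_apply _) measurable_const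
  have hfg : ∀ g : F.Ω ≃ᵐ F.Ω, Measurable (fun w => (fun j' : F.I => F.p j' (g w))) :=
    fun g => measurable_pi_lambda _ (fun j' => (F.p_meas j').comp g.measurable)
  have happ := congrArg (fun μ : Measure (F.I → ℝ) => μ {h : F.I → ℝ | h ⟨j, hj⟩ ≤ c}) hB1
  simp only [Measure.smul_apply, smul_eq_mul] at happ
  rw [Measure.finset_sum_apply] at happ
  have hmapg : ∀ g ∈ F.G,
      (Measure.map (fun w => fun j' : F.I => F.p j' (g w)) F.Q) {h : F.I → ℝ | h ⟨j, hj⟩ ≤ c}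
        = F.Q ((⇑g) ⁻¹' {w | F.p j w ≤ c}) := by
    intro g _; rw [Measure.map_apply (hfg g) hT]; rfl
  have hf0 : Measurable (fun w => fun j' : F.I => F.p j' w) :=
    measurable_pi_lambda _ (fun j' => F.p_meas j')
  have hmap1 :
      (Measure.map (fun w => fun j' : F.I => F.p j' w) F.Q) {h : F.I → ℝ | h ⟨j, hj⟩ ≤ c}
        = F.Q {w | F.p j w ≤ c} := by
    rw [Measure.map_apply hf0 hT]; rfl
  rw [Finset.sum_congr rfl hmapg, hmap1] at happ
  rw [← happ, ENNReal.toReal_mul, ENNReal.toReal_inv, ENNReal.toReal_natCast,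
    ENNReal.toReal_sum (fun g _ => measure_ne_top F.Q _)]

/-- Core estimate: under (A1), (B1), (B2), every `p`-value is `P*`-small at the oracle
threshold: `P*(p_j(W) ≤ c(α))(w) ≤ log(1/(1-α)) r² / B`. -/
lemma PB_core_bound {r α : ℝ} (hA1 : F.A1) (hB1 : F.B1) (hB2 : F.B2 r)
    (hα0 : 0 < α) (hα1 : α < 1) (j : Fin m) (w : F.Ω) :
    F.Pstar {w' | F.p j w' ≤ F.oracle α} w ≤ Real.log (1 / (1 - α)) * r ^ 2 / F.B := by
  classical
  have hBpos : (0:ℝ) < F.B := by exact_mod_cast F.B_pos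
  have hL : 0 ≤ Real.log (1 / (1 - α)) :=
    Real.log_nonneg (one_le_one_div (by linarith) (by linarith))
  have hRHS : 0 ≤ Real.log (1 / (1 - α)) * r ^ 2 / F.B := by positivity
  by_cases hc0 : F.oracle α = 0
  · rw [hc0]
    by_cases hex : ∃ g ∈ F.G, F.p j (g w) ≤ 0
    · obtain ⟨g, hg, hle⟩ := hex
      have h0 : F.p j (g w) = 0 := le_antisymm hle (F.hS _ (F.p_mem j (g w))).1
      have h0S : (0:ℝ) ∈ F.S := h0 ▸ F.p_mem j (g w)
      have hub := (hB2 j 0 h0S w).2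
      calc F.Pstar {w' | F.p j w' ≤ 0} w ≤ r * 0 := hub
      _ ≤ Real.log (1 / (1 - α)) * r ^ 2 / F.B := by rw [mul_zero]; exact hRHS
    · have hz : F.Pstar {w' | F.p j w' ≤ 0} w = 0 := by
        unfold Framework.Pstar
        have hzero : ∀ g ∈ F.G,
            ({w' | F.p j w' ≤ 0} : Set F.Ω).indicator (fun _ => (1:ℝ)) (g w) = 0 := by
          intro g hg
          exact Set.indicator_of_notMem (fun h => hex ⟨g, hg, h⟩) (fun _ => (1:ℝ))
        rw [Finset.sum_congr rfl hzero]
        simp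
      rw [hz]; exact hRHS
  · set c := F.oracle α with hcdef
    have hmem : c ∈ F.S.filter (fun s => (F.Q {w | F.nullMin w ≤ s}).toReal ≤ α) := by
      rw [hcdef]
      unfold Framework.oracle
      rcases hmax : (F.S.filter (fun s => (F.Q {w | F.nullMin w ≤ s}).toReal ≤ α)).max
        with _ | x
      · exfalso
        apply hc0
        rw [hcdef]
        unfold Framework.oracle
        rw [hmax]
        rfl
      · exact Finset.mem_of_max hmax
    obtain ⟨hcS, hcα⟩ := Finset.mem_filter.mp hmem
    have hc_nonneg : 0 ≤ c := (F.hS _ hcS).1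
    have hcpos : 0 < c := lt_of_le_of_ne hc_nonneg (Ne.symm hc0)
    have hub : F.Pstar {w' | F.p j w' ≤ c} w ≤ r * c := (hB2 j c hcS w).2
    by_cases hr : r ≤ 0
    · have : r * c ≤ 0 := mul_nonpos_iff.mpr (Or.inr ⟨hr, hc_nonneg⟩)
      linarith
    push_neg at hr
    have hstep1 : ∀ j' ∈ F.I, r⁻¹ * c ≤ (F.Q {w | F.p j' w ≤ c}).toReal := by
      intro j' hj'
      have hEmeas : MeasurableSet {w | F.p j' w ≤ c} :=
        measurableSet_le (F.p_meas j') measurable_const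
      rw [PB_B1_apply F hB1 hj' c, ← PB_integral_Pstar F hEmeas]
      have hconst : r⁻¹ * c = ∫ _w, r⁻¹ * c ∂F.Q := by simp
      rw [hconst]
      exact integral_mono (integrable_const _) (PB_Pstar_int F hEmeas)
        (fun w' => (hB2 j' c hcS w').1)
    have hbm_meas : ∀ b' : Fin F.B, Measurable (F.blockMin b') :=
      fun b' => PB_fmin_meas F _
    have hstep2 : ∀ b' : Fin F.B, r⁻¹ * c ≤ (F.Q {w | F.blockMin b' w ≤ c}).toReal := by
      intro b'
      obtain ⟨j', hj'⟩ := F.A_I b'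
      have hsub : {w | F.p j' w ≤ c} ⊆ {w | F.blockMin b' w ≤ c} := by
        intro w' hw'
        exact le_trans (PB_fmin_le_of_mem F hj' w') hw'
      refine le_trans (hstep1 j' (Finset.mem_inter.mp hj').2) ?_
      exact ENNReal.toReal_mono (measure_ne_top F.Q _) (measure_mono hsub)
    have hind : iIndepFun
        (fun b' : Fin F.B => F.blockMin b') F.Q := by
      have h := hA1 _ F.G_one _ F.G_one
      have hrefl : ∀ w' : F.Ω, (MeasurableEquiv.refl F.Ω) w' = w' := fun _ => rfl
      simpa [hrefl, min_self] using h
    have hprod := hind.measure_inter_preimage_eq_mul Finset.univ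
      (sets := fun _ => Set.Ioi c) (fun i _ => measurableSet_Ioi)
    have hIne : F.I.Nonempty := by
      obtain ⟨j0, hj0⟩ := F.A_I ⟨0, F.B_pos⟩
      exact ⟨j0, (Finset.mem_inter.mp hj0).2⟩
    have hevent : (⋂ b' ∈ Finset.univ, (F.blockMin b') ⁻¹' Set.Ioi c)
        = {w | c < F.nullMin w} := by
      ext w'
      simp only [Set.mem_iInter, Set.mem_preimage, Set.mem_Ioi, Set.mem_setOf_eq,
        Finset.mem_univ, forall_true_left, true_implies]
      constructor
      · intro h
        rw [Framework.nullMin, PB_lt_fmin_iff F hIne]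
        intro j' hj'
        obtain ⟨b', hb'⟩ := F.A_cover j'
        exact (PB_lt_fmin_iff F (F.A_I b') w' c).mp (h b') j'
          (Finset.mem_inter.mpr ⟨hb', hj'⟩)
      · intro h b'
        rw [Framework.blockMin, PB_lt_fmin_iff F (F.A_I b')]
        intro j' hj'
        exact (PB_lt_fmin_iff F hIne w' c).mp h j' (Finset.mem_inter.mp hj').2
    have hnm_meas : Measurable F.nullMin := PB_fmin_meas F _
    have hcompl : F.Q {w | c < F.nullMin w} = 1 - F.Q {w | F.nullMin w ≤ c} := by
      have hse : {w | c < F.nullMin w} = {w | F.nullMin w ≤ c}ᶜ := by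
        ext w'; simp [not_le]
      rw [hse, prob_compl_eq_one_sub (measurableSet_le hnm_meas measurable_const)]
    have hq1 : F.Q {w | F.nullMin w ≤ c} ≤ 1 := prob_le_one
    have hlow : 1 - α ≤ (F.Q {w | c < F.nullMin w}).toReal := by
      rw [hcompl, ENNReal.toReal_sub_of_le hq1 ENNReal.one_ne_top]
      simp only [ENNReal.toReal_one]
      linarith
    have hfactor : ∀ b' : Fin F.B,
        (F.Q ((F.blockMin b') ⁻¹' Set.Ioi c)).toReal ≤ 1 - r⁻¹ * c := by
      intro b'
      have hse : (F.blockMin b') ⁻¹' Set.Ioi c = {w | F.blockMin b' w ≤ c}ᶜ := by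
        ext w'; simp [Set.mem_preimage, not_le]
      rw [hse, prob_compl_eq_one_sub (measurableSet_le (hbm_meas b') measurable_const),
        ENNReal.toReal_sub_of_le prob_le_one ENNReal.one_ne_top]
      simp only [ENNReal.toReal_one]
      linarith [hstep2 b']
    have hprodR : (1 - α : ℝ) ≤ (1 - r⁻¹ * c) ^ F.B := by
      have h1 : (1 - α : ℝ)
          ≤ ∏ b' : Fin F.B, (F.Q ((F.blockMin b') ⁻¹' Set.Ioi c)).toReal := by
        have htr := congrArg ENNReal.toReal hprod
        rw [ENNReal.toReal_prod] at htr
        calc (1 - α : ℝ) ≤ (F.Q {w | c < F.nullMin w}).toReal := hlow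
        _ = (F.Q (⋂ b' ∈ Finset.univ, (F.blockMin b') ⁻¹' Set.Ioi c)).toReal := by
            rw [hevent]
        _ = ∏ b' : Fin F.B, (F.Q ((F.blockMin b') ⁻¹' Set.Ioi c)).toReal := htr
      refine le_trans h1 ?_
      calc (∏ b' : Fin F.B, (F.Q ((F.blockMin b') ⁻¹' Set.Ioi c)).toReal)
          ≤ ∏ _b' : Fin F.B, (1 - r⁻¹ * c) :=
            Finset.prod_le_prod (fun b' _ => ENNReal.toReal_nonneg) (fun b' _ => hfactor b')
      _ = (1 - r⁻¹ * c) ^ F.B := by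
          rw [Finset.prod_const, Finset.card_univ, Fintype.card_fin]
    set t : ℝ := 1 - r⁻¹ * c with htdef
    have ht1 : r⁻¹ * c ≤ 1 := by
      have hs2 := hstep2 ⟨0, F.B_pos⟩
      have hle1 : (F.Q {w | F.blockMin ⟨0, F.B_pos⟩ w ≤ c}).toReal ≤ 1 := by
        calc (F.Q {w | F.blockMin ⟨0, F.B_pos⟩ w ≤ c}).toReal
            ≤ (F.Q Set.univ).toReal :=
              ENNReal.toReal_mono (measure_ne_top F.Q _) (measure_mono (Set.subset_univ _))
        _ = 1 := by simp
      linarith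
    have ht0 : 0 ≤ t := by rw [htdef]; linarith
    have htpos : 0 < t := by
      rcases lt_or_eq_of_le ht0 with h | h
      · exact h
      · exfalso
        have hzero : t ^ F.B = 0 := by rw [← h]; exact zero_pow F.B_pos.ne'
        have : (1 - α : ℝ) ≤ t ^ F.B := hprodR
        rw [hzero] at this
        linarith
    have hlog1 : Real.log (1 - α) ≤ (F.B : ℝ) * Real.log t := by
      calc Real.log (1 - α) ≤ Real.log (t ^ F.B) :=
        Real.log_le_log (by linarith) hprodR
      _ = (F.B : ℝ) * Real.log t := by rw [Real.log_pow]
    have hlog2 : Real.log t ≤ -(r⁻¹ * c) := by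
      have hl := Real.log_le_sub_one_of_pos htpos
      rw [htdef] at hl ⊢
      linarith
    have hLeq : Real.log (1 / (1 - α)) = -Real.log (1 - α) := by
      rw [one_div, Real.log_inv]
    have hcbound : (F.B : ℝ) * (r⁻¹ * c) ≤ Real.log (1 / (1 - α)) := by
      rw [hLeq]
      nlinarith [hlog1, hlog2, hBpos]
    have hrinv : r * r⁻¹ = 1 := mul_inv_cancel₀ (ne_of_gt hr)
    have hcle : c ≤ r * Real.log (1 / (1 - α)) / F.B := by
      have h3 : r⁻¹ * c ≤ Real.log (1 / (1 - α)) / F.B := by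
        rw [le_div_iff₀ hBpos]
        linarith [hcbound]
      calc c = r * (r⁻¹ * c) := by rw [← mul_assoc, hrinv, one_mul]
      _ ≤ r * (Real.log (1 / (1 - α)) / F.B) := mul_le_mul_of_nonneg_left h3 hr.le
      _ = r * Real.log (1 / (1 - α)) / F.B := by ring
    calc F.Pstar {w' | F.p j w' ≤ c} w ≤ r * c := hub
    _ ≤ r * (r * Real.log (1 / (1 - α)) / F.B) := mul_le_mul_of_nonneg_left hcle hr.le
    _ = Real.log (1 / (1 - α)) * r ^ 2 / F.B := by ring

end AuxFramework

end PBAux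

/-- **Per-block covariance bound for randomized indicators.** Under (A1), (B1) and (B2)
with constant `r`, with `R_b(g,w) = 1{p^(b)(gw) > c(α)}` and `G, G'` independent uniform
random permutations independent of `W`, for every block `b`:
`0 ≤ E[R_b(G,W)R_b(G',W)] − (E[R_b(G,W)])² ≤ (log(1/(1−α))·r²·m_B/B)²`.
The expectations over `(G, G', W)` are written as uniform averages over `𝒢 × 𝒢`
of integrals with respect to `Q`. -/
theorem per_block_covariance_bound
    {m : ℕ} (F : Framework m) (r : ℝ)
    (hA1 : F.A1) (hB1 : F.B1) (hB2 : F.B2 r)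
    (α : ℝ) (hα : α ∈ Set.Ioo (0 : ℝ) 1) (b : Fin F.B) :
    0 ≤ (((F.G.card : ℝ) ^ 2)⁻¹ *
          ∑ g ∈ F.G, ∑ g' ∈ F.G, ∫ w,
            (if F.oracle α < F.blockMin b (g w) then (1 : ℝ) else 0) *
            (if F.oracle α < F.blockMin b (g' w) then (1 : ℝ) else 0) ∂F.Q) -
        ((F.G.card : ℝ)⁻¹ *
          ∑ g ∈ F.G, ∫ w,
            (if F.oracle α < F.blockMin b (g w) then (1 : ℝ) else 0) ∂F.Q) ^ 2 ∧
      (((F.G.card : ℝ) ^ 2)⁻¹ *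
          ∑ g ∈ F.G, ∑ g' ∈ F.G, ∫ w,
            (if F.oracle α < F.blockMin b (g w) then (1 : ℝ) else 0) *
            (if F.oracle α < F.blockMin b (g' w) then (1 : ℝ) else 0) ∂F.Q) -
        ((F.G.card : ℝ)⁻¹ *
          ∑ g ∈ F.G, ∫ w,
            (if F.oracle α < F.blockMin b (g w) then (1 : ℝ) else 0) ∂F.Q) ^ 2
      ≤ (Real.log (1 / (1 - α)) * r ^ 2 * (F.mB : ℝ) / (F.B : ℝ)) ^ 2 := by
  classical
  obtain ⟨hα0, hα1⟩ := hα
  have hBpos : (0:ℝ) < F.B := by exact_mod_cast F.B_pos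
  have hL : 0 ≤ Real.log (1 / (1 - α)) :=
    Real.log_nonneg (one_le_one_div (by linarith) (by linarith))
  have hbm_meas : Measurable (F.blockMin b) := PB_fmin_meas F _
  set c : ℝ := F.oracle α with hcdef
  set K : ℝ := Real.log (1 / (1 - α)) * r ^ 2 * (F.mB : ℝ) / (F.B : ℝ) with hKdef
  have hcard : ∀ w, (∑ g ∈ F.G, (1 - (if c < F.blockMin b (g w) then (1:ℝ) else 0)))
      ≤ F.G.card * K := by
    intro w
    have hone : ∀ g : F.Ω ≃ᵐ F.Ω,
        (1 - (if c < F.blockMin b (g w) then (1:ℝ) else 0))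
          = (if F.blockMin b (g w) ≤ c then (1:ℝ) else 0) := by
      intro g
      by_cases h : c < F.blockMin b (g w)
      · rw [if_pos h, if_neg (not_le.mpr h)]; ring
      · rw [if_neg h, if_pos (not_lt.mp h)]; ring
    have hub : ∀ g : F.Ω ≃ᵐ F.Ω, (if F.blockMin b (g w) ≤ c then (1:ℝ) else 0)
        ≤ ∑ j ∈ F.A b ∩ F.I, (if F.p j (g w) ≤ c then (1:ℝ) else 0) := by
      intro g
      by_cases h : F.blockMin b (g w) ≤ c
      · rw [if_pos h]
        obtain ⟨j, hj, hjle⟩ := (PB_fmin_le_iff F (F.A_I b) (g w) c).mp h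
        calc (1:ℝ) = (if F.p j (g w) ≤ c then (1:ℝ) else 0) := by rw [if_pos hjle]
        _ ≤ ∑ j' ∈ F.A b ∩ F.I, (if F.p j' (g w) ≤ c then (1:ℝ) else 0) := by
            refine Finset.single_le_sum (f := fun j' => if F.p j' (g w) ≤ c then (1:ℝ) else 0) (fun j' _ => ?_) hj
            split <;> norm_num
      · rw [if_neg h]
        refine Finset.sum_nonneg (fun j' _ => ?_)
        split <;> norm_num
    have hNnn : (0:ℝ) ≤ F.G.card := by positivity
    calc (∑ g ∈ F.G, (1 - (if c < F.blockMin b (g w) then (1:ℝ) else 0)))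
        = ∑ g ∈ F.G, (if F.blockMin b (g w) ≤ c then (1:ℝ) else 0) :=
          Finset.sum_congr rfl (fun g _ => hone g)
    _ ≤ ∑ g ∈ F.G, ∑ j ∈ F.A b ∩ F.I, (if F.p j (g w) ≤ c then (1:ℝ) else 0) :=
          Finset.sum_le_sum (fun g _ => hub g)
    _ = ∑ j ∈ F.A b ∩ F.I, ∑ g ∈ F.G, (if F.p j (g w) ≤ c then (1:ℝ) else 0) :=
          Finset.sum_comm
    _ = ∑ j ∈ F.A b ∩ F.I, (F.G.card : ℝ) * F.Pstar {w' | F.p j w' ≤ c} w := by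
          refine Finset.sum_congr rfl (fun j _ => ?_)
          unfold Framework.Pstar
          have hNne : (F.G.card : ℝ) ≠ 0 := by
            have := PB_G_card_pos F
            positivity
          rw [← mul_assoc, mul_inv_cancel₀ hNne, one_mul]
          refine Finset.sum_congr rfl (fun g _ => ?_)
          simp [Set.indicator_apply, Set.mem_setOf_eq]
    _ ≤ ∑ _j ∈ F.A b ∩ F.I, (F.G.card : ℝ) * (Real.log (1 / (1 - α)) * r ^ 2 / F.B) := by
          refine Finset.sum_le_sum (fun j _ => ?_)
          exact mul_le_mul_of_nonneg_left
            (PB_core_bound F hA1 hB1 hB2 hα0 hα1 j w) hNnn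
    _ = ((F.A b ∩ F.I).card : ℝ)
          * ((F.G.card : ℝ) * (Real.log (1 / (1 - α)) * r ^ 2 / F.B)) := by
          rw [Finset.sum_const, nsmul_eq_mul]
    _ ≤ (F.mB : ℝ) * ((F.G.card : ℝ) * (Real.log (1 / (1 - α)) * r ^ 2 / F.B)) := by
          refine mul_le_mul_of_nonneg_right ?_ (by positivity)
          have h1 : (F.A b ∩ F.I).card ≤ (F.A b).card :=
            Finset.card_le_card Finset.inter_subset_left
          have h2 : (F.A b).card ≤ F.mB := by
            unfold Framework.mB
            exact Finset.le_sup (f := fun b' : Fin F.B => (F.A b').card) (Finset.mem_univ b)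
          exact_mod_cast le_trans h1 h2
    _ = F.G.card * K := by rw [hKdef]; ring
  exact PB_abstract_cov_bound F.Q F.G ⟨_, F.G_one⟩
    (fun g w => if c < F.blockMin b (g w) then (1:ℝ) else 0)
    (fun g => Measurable.ite
      (measurableSet_lt measurable_const (hbm_meas.comp g.measurable))
      measurable_const measurable_const)
    (fun g w => by split <;> norm_num)
    (fun g w => by split <;> norm_num)
    K hcard
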